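/- Let g : [0,a) → ℝ satisfy the hypotheses g(0)=0, g(x) ≥ x, g([0,a)) ⊆ [0,a), g'(t) = 1 + g(g(t)), and additionally exp(x) ≤ 1 + g(x) for all x ∈ [0,a). Then every x ∈ [0,a) satisfies x ≤ ∫₀^{g(x)} exp(-t) dt ≤ 1; in particular a ≤ 1 cannot be avoided, so no such g exists on [0,∞). -/

import Mathlib

/-- Let `g` be differentiable on `[0, a)` with `g 0 = 0`, `g x ≥ x`, `g ([0,a)) ⊆ [0,a)`,
satisfying `g' t = 1 + g (g t)`, and additionally `exp x ≤ 1 + g x` on `[0, a)`.  Then every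
`x ∈ [0, a)` satisfies `x ≤ ∫₀^{g x} exp (-t) dt ≤ 1`; in particular `a ≤ 1`, so no such `g`
exists on `[0, ∞)`. -/
theorem stmt_9 (a : ℝ) (g : ℝ → ℝ)
    (hg0 : g 0 = 0)
    (hge : ∀ x ∈ Set.Ico (0 : ℝ) a, x ≤ g x)
    (hmaps : Set.MapsTo g (Set.Ico (0 : ℝ) a) (Set.Ico (0 : ℝ) a))
    (hderiv : ∀ t ∈ Set.Ico (0 : ℝ) a,
      HasDerivWithinAt g (1 + g (g t)) (Set.Ici 0) t)
    (hexp : ∀ x ∈ Set.Ico (0 : ℝ) a, Real.exp x ≤ 1 + g x) :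
    (∀ x ∈ Set.Ico (0 : ℝ) a,
      x ≤ (∫ t in (0 : ℝ)..(g x), Real.exp (-t)) ∧
      (∫ t in (0 : ℝ)..(g x), Real.exp (-t)) ≤ 1) ∧
    a ≤ 1 := by
  have hint : ∀ y : ℝ, (∫ t in (0:ℝ)..y, Real.exp (-t)) = 1 - Real.exp (-y) := fun y => by
    simp [intervalIntegral.integral_comp_neg (fun t => Real.exp t), integral_exp]
  set F : ℝ → ℝ := fun t => 1 - Real.exp (-g t) - t with hF
  have hFd : ∀ t ∈ Set.Ico (0 : ℝ) a,
      HasDerivWithinAt F (Real.exp (-g t) * (1 + g (g t)) - 1) (Set.Ici 0) t := by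
    intro t ht
    have h1 : HasDerivWithinAt (fun t => Real.exp (-g t))
        (Real.exp (-g t) * (-(1 + g (g t)))) (Set.Ici 0) t := ((hderiv t ht).neg).exp
    have h2 : HasDerivWithinAt (fun x => 1 - Real.exp (-g x) - x)
        (0 - Real.exp (-g t) * -(1 + g (g t)) - 1) (Set.Ici 0) t := ((hasDerivWithinAt_const t (Set.Ici (0:ℝ)) (1:ℝ)).sub h1).sub
      (hasDerivWithinAt_id t (Set.Ici (0:ℝ)))
    convert h2 using 1
    ring
  have hmono : MonotoneOn F (Set.Ico (0 : ℝ) a) := by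
    apply monotoneOn_of_hasDerivWithinAt_nonneg (convex_Ico 0 a)
      (f' := fun t => Real.exp (-g t) * (1 + g (g t)) - 1)
    · intro t ht
      exact ((hFd t ht).continuousWithinAt).mono Set.Ico_subset_Ici_self
    · intro t ht
      rw [interior_Ico] at ht
      refine (hFd t ⟨le_of_lt ht.1, ht.2⟩).mono ?_
      rw [interior_Ico]
      exact fun y hy => le_of_lt hy.1
    · intro t ht
      rw [interior_Ico] at ht
      have ht' : t ∈ Set.Ico (0:ℝ) a := ⟨le_of_lt ht.1, ht.2⟩
      have h3 := hexp (g t) (hmaps ht')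
      have hm : Real.exp (-g t) * Real.exp (g t) = 1 := by
        rw [← Real.exp_add]; simp
      nlinarith [Real.exp_pos (-g t)]
  have key : ∀ x ∈ Set.Ico (0 : ℝ) a,
      x ≤ (∫ t in (0 : ℝ)..(g x), Real.exp (-t)) ∧
      (∫ t in (0 : ℝ)..(g x), Real.exp (-t)) ≤ 1 := by
    intro x hx
    have h0 : (0:ℝ) ∈ Set.Ico (0:ℝ) a := ⟨le_refl 0, lt_of_le_of_lt hx.1 hx.2⟩
    have := hmono h0 hx hx.1
    have hF0 : F 0 = 0 := by simp [hF, hg0]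
    rw [hint]
    constructor
    · have : F x = 1 - Real.exp (-g x) - x := rfl
      linarith [hmono h0 hx hx.1, hF0]
    · linarith [Real.exp_pos (-g x)]
  refine ⟨key, ?_⟩
  by_contra h
  push_neg at h
  have hx : (1 + a) / 2 ∈ Set.Ico (0:ℝ) a := by constructor <;> [linarith; linarith]
  have := (key _ hx).1.trans (key _ hx).2
  linarith
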